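/- Let ρ be a two-qubit density matrix and let t be the real 3×3 matrix with entries t m n = Re(Tr(ρ · (σ_m ⊗ₖ σ_n))) for m, n ∈ {1,2,3}, and let μ₁ ≥ μ₂ ≥ μ₃ be the eigenvalues of the symmetric matrix tᵀt. Then the supremum over unit vectors a, a', b, b' ∈ ℝ³ of Re(Tr(ρ · B(a,a',b,b'))) equals 2√(μ₁ + μ₂). In particular, ρ violates the CHSH inequality for some settings if and only if μ₁ + μ₂ > 1. -/

import Mathlib

open Matrix
open scoped Kronecker ComplexOrder

noncomputable def pauli1 : Matrix (Fin 2) (Fin 2) ℂ := !![0, 1; 1, 0]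
noncomputable def pauli2 : Matrix (Fin 2) (Fin 2) ℂ := !![0, -Complex.I; Complex.I, 0]
noncomputable def pauli3 : Matrix (Fin 2) (Fin 2) ℂ := !![1, 0; 0, -1]

/-- For `a ∈ ℝ³`, the matrix `a·σ = a₁σ₁ + a₂σ₂ + a₃σ₃`. -/
noncomputable def dotPauli (a : Fin 3 → ℝ) : Matrix (Fin 2) (Fin 2) ℂ :=
  (a 0 : ℂ) • pauli1 + (a 1 : ℂ) • pauli2 + (a 2 : ℂ) • pauli3

def IsUnitVec (a : Fin 3 → ℝ) : Prop := a 0 ^ 2 + a 1 ^ 2 + a 2 ^ 2 = 1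

/-- The CHSH operator `B(a,a',b,b') = (a·σ)⊗ₖ((b+b')·σ) + (a'·σ)⊗ₖ((b−b')·σ)`. -/
noncomputable def chshOperator (a a' b b' : Fin 3 → ℝ) :
    Matrix (Fin 2 × Fin 2) (Fin 2 × Fin 2) ℂ :=
  dotPauli a ⊗ₖ dotPauli (b + b') + dotPauli a' ⊗ₖ dotPauli (b - b')

def IsDensityMatrix {n : Type*} [Fintype n] [DecidableEq n] (ρ : Matrix n n ℂ) : Prop :=
  ρ.PosSemidef ∧ ρ.trace = 1

noncomputable def pauliVec : Fin 3 → Matrix (Fin 2) (Fin 2) ℂ := ![pauli1, pauli2, pauli3]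

/-- The correlation tensor `t m n = Re Tr(ρ (σₘ ⊗ σₙ))` of a two-qubit state. -/
noncomputable def corrTensor (ρ : Matrix (Fin 2 × Fin 2) (Fin 2 × Fin 2) ℂ) :
    Matrix (Fin 3) (Fin 3) ℝ :=
  fun m n => (Matrix.trace (ρ * (pauliVec m ⊗ₖ pauliVec n))).re

namespace HorodeckiAux

lemma dot_self_nonneg (x : Fin 3 → ℝ) : 0 ≤ x ⬝ᵥ x :=
  Finset.sum_nonneg fun _ _ => mul_self_nonneg _

lemma dot_sum (x : Fin 3 → ℝ) (f : Fin 3 → Fin 3 → ℝ) :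
    x ⬝ᵥ (∑ j, f j) = ∑ j, x ⬝ᵥ f j := by
  simp only [dotProduct, Finset.sum_apply, Finset.mul_sum]
  exact Finset.sum_comm

lemma mulVec_sumv (A : Matrix (Fin 3) (Fin 3) ℝ) (f : Fin 3 → Fin 3 → ℝ) :
    A *ᵥ (∑ j, f j) = ∑ j, A *ᵥ (f j) := by
  funext i
  simp only [mulVec, dotProduct, Finset.sum_apply, Finset.mul_sum]
  exact Finset.sum_comm

lemma cs_dot (a w : Fin 3 → ℝ) (ha : a ⬝ᵥ a = 1) : a ⬝ᵥ w ≤ Real.sqrt (w ⬝ᵥ w) := by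
  have h := Finset.sum_mul_sq_le_sq_mul_sq Finset.univ a w
  have e1 : a ⬝ᵥ a = ∑ i, a i ^ 2 := by simp [dotProduct, sq]
  have e2 : w ⬝ᵥ w = ∑ i, w i ^ 2 := by simp [dotProduct, sq]
  have h2 : (a ⬝ᵥ w) ^ 2 ≤ (a ⬝ᵥ a) * (w ⬝ᵥ w) := by rw [e1, e2]; exact h
  rw [ha, one_mul] at h2
  calc a ⬝ᵥ w ≤ |a ⬝ᵥ w| := le_abs_self _
    _ = Real.sqrt ((a ⬝ᵥ w) ^ 2) := (Real.sqrt_sq_eq_abs _).symm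
    _ ≤ Real.sqrt (w ⬝ᵥ w) := Real.sqrt_le_sqrt h2

section Spectral

variable (T : Matrix (Fin 3) (Fin 3) ℝ) (hsym : (Tᵀ * T).IsHermitian)

noncomputable def v (j : Fin 3) : Fin 3 → ℝ := ⇑(hsym.eigenvectorBasis j)

lemma M_mulVec_v (j : Fin 3) :
    (Tᵀ * T) *ᵥ v T hsym j = hsym.eigenvalues j • v T hsym j :=
  hsym.mulVec_eigenvectorBasis j

lemma v_orth (j k : Fin 3) : v T hsym j ⬝ᵥ v T hsym k = if j = k then 1 else 0 := by
  have h1 : star ((hsym.eigenvectorUnitary : Matrix (Fin 3) (Fin 3) ℝ)) *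
      (hsym.eigenvectorUnitary : Matrix (Fin 3) (Fin 3) ℝ) = 1 :=
    hsym.eigenvectorUnitary.2.1
  have h2 := congrFun (congrFun h1 j) k
  simpa [Matrix.mul_apply, Matrix.star_apply, Matrix.one_apply, dotProduct,
    Matrix.IsHermitian.eigenvectorUnitary_apply, v] using h2

lemma v_complete (i k : Fin 3) :
    ∑ j, v T hsym j i * v T hsym j k = if i = k then 1 else 0 := by
  have h1 : (hsym.eigenvectorUnitary : Matrix (Fin 3) (Fin 3) ℝ) *
      star ((hsym.eigenvectorUnitary : Matrix (Fin 3) (Fin 3) ℝ)) = 1 :=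
    hsym.eigenvectorUnitary.2.2
  have h2 := congrFun (congrFun h1 i) k
  simpa [Matrix.mul_apply, Matrix.star_apply, Matrix.one_apply,
    Matrix.IsHermitian.eigenvectorUnitary_apply, v, mul_comm] using h2

lemma expand_v (x : Fin 3 → ℝ) : x = ∑ j, (v T hsym j ⬝ᵥ x) • v T hsym j := by
  funext i
  rw [Finset.sum_apply]
  simp only [Pi.smul_apply, smul_eq_mul, dotProduct, Finset.sum_mul]
  rw [Finset.sum_comm]
  have key : ∀ l : Fin 3, (∑ j, v T hsym j l * x l * v T hsym j i)
      = x l * (if l = i then 1 else 0) := fun l => by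
    rw [← v_complete T hsym l i, Finset.mul_sum]
    exact Finset.sum_congr rfl fun j _ => by ring
  rw [Finset.sum_congr rfl fun l _ => key l]
  simp

lemma qform (x : Fin 3 → ℝ) :
    x ⬝ᵥ ((Tᵀ * T) *ᵥ x) = ∑ j, hsym.eigenvalues j * (v T hsym j ⬝ᵥ x) ^ 2 := by
  have hMx : (Tᵀ * T) *ᵥ x
      = ∑ j, ((v T hsym j ⬝ᵥ x) * hsym.eigenvalues j) • v T hsym j := by
    conv_lhs => rw [expand_v T hsym x]
    rw [mulVec_sumv]
    refine Finset.sum_congr rfl fun j _ => ?_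
    rw [mulVec_smul, M_mulVec_v, smul_smul]
  rw [hMx, dot_sum]
  refine Finset.sum_congr rfl fun j _ => ?_
  rw [dotProduct_smul, show x ⬝ᵥ v T hsym j = v T hsym j ⬝ᵥ x from dotProduct_comm _ _,
    smul_eq_mul]
  ring

lemma parseval (x : Fin 3 → ℝ) : x ⬝ᵥ x = ∑ j, (v T hsym j ⬝ᵥ x) ^ 2 := by
  nth_rewrite 2 [expand_v T hsym x]
  rw [dot_sum]
  refine Finset.sum_congr rfl fun j _ => ?_
  rw [dotProduct_smul, show x ⬝ᵥ v T hsym j = v T hsym j ⬝ᵥ x from dotProduct_comm _ _,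
    smul_eq_mul]
  ring

lemma eig_nonneg (j : Fin 3) : 0 ≤ hsym.eigenvalues j := by
  have h : Tᴴ = Tᵀ := by ext i k; simp [conjTranspose_apply]
  have hpsd : (Tᵀ * T).PosSemidef := h ▸ Matrix.posSemidef_conjTranspose_mul_self T
  exact hpsd.eigenvalues_nonneg j

lemma bessel (y z w : Fin 3 → ℝ) (hy : y ⬝ᵥ y = 1) (hz : z ⬝ᵥ z = 1)
    (hyz : y ⬝ᵥ z = 0) (hw : w ⬝ᵥ w = 1) : (w ⬝ᵥ y) ^ 2 + (w ⬝ᵥ z) ^ 2 ≤ 1 := by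
  set p := w ⬝ᵥ y with hp
  set q := w ⬝ᵥ z with hq
  have h0 : 0 ≤ (w - p • y - q • z) ⬝ᵥ (w - p • y - q • z) := dot_self_nonneg _
  have hexp : (w - p • y - q • z) ⬝ᵥ (w - p • y - q • z) = 1 - p ^ 2 - q ^ 2 := by
    simp only [sub_dotProduct, dotProduct_sub, smul_dotProduct, dotProduct_smul, smul_eq_mul]
    rw [dotProduct_comm y w, dotProduct_comm z w, dotProduct_comm z y]
    rw [hy, hz, hyz, hw, ← hp, ← hq]
    ring
  rw [hexp] at h0
  linarith

section Mu

variable (μ : Fin 3 → ℝ) (hμ : Antitone μ) (e : Fin 3 ≃ Fin 3)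
  (he : ∀ i, hsym.eigenvalues i = μ (e i))

include hμ he in
lemma mu_nonneg (k : Fin 3) : 0 ≤ μ k := by
  have := eig_nonneg T hsym (e.symm k)
  rwa [he, Equiv.apply_symm_apply] at this

include hμ he in
lemma single_bound (c : Fin 3 → ℝ) (hc : c ⬝ᵥ c = 1) :
    c ⬝ᵥ ((Tᵀ * T) *ᵥ c) ≤ μ 0 := by
  rw [qform T hsym]
  calc ∑ j, hsym.eigenvalues j * (v T hsym j ⬝ᵥ c) ^ 2
      ≤ ∑ j, μ 0 * (v T hsym j ⬝ᵥ c) ^ 2 := by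
        refine Finset.sum_le_sum fun j _ => ?_
        exact mul_le_mul_of_nonneg_right (by rw [he]; exact hμ (Fin.zero_le _)) (sq_nonneg _)
    _ = μ 0 := by rw [← Finset.mul_sum, ← parseval, hc, mul_one]

include hμ he in
lemma pair_bound (c c' : Fin 3 → ℝ) (hc : c ⬝ᵥ c = 1) (hc' : c' ⬝ᵥ c' = 1)
    (hcc' : c ⬝ᵥ c' = 0) :
    c ⬝ᵥ ((Tᵀ * T) *ᵥ c) + c' ⬝ᵥ ((Tᵀ * T) *ᵥ c') ≤ μ 0 + μ 1 := by
  rw [qform T hsym, qform T hsym]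
  set w : Fin 3 → ℝ := fun j => (v T hsym j ⬝ᵥ c) ^ 2 + (v T hsym j ⬝ᵥ c') ^ 2 with hw
  have hsum : (∑ j, hsym.eigenvalues j * (v T hsym j ⬝ᵥ c) ^ 2)
      + (∑ j, hsym.eigenvalues j * (v T hsym j ⬝ᵥ c') ^ 2) = ∑ j, μ (e j) * w j := by
    rw [← Finset.sum_add_distrib]
    exact Finset.sum_congr rfl fun j _ => by rw [he, hw]; ring
  rw [hsum]
  have hre : ∑ j, μ (e j) * w j = ∑ k, μ k * w (e.symm k) :=
    Fintype.sum_equiv e (fun j => μ (e j) * w j) (fun k => μ k * w (e.symm k))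
      (fun j => by simp)
  rw [hre]
  have hw1 : ∀ j, w j ≤ 1 := fun j => by
    rw [hw]
    exact bessel c c' (v T hsym j) hc hc' hcc'
      (by have := v_orth T hsym j j; simpa using this)
  have hw0 : ∀ j, 0 ≤ w j := fun j => add_nonneg (sq_nonneg _) (sq_nonneg _)
  have hsw : ∑ j, w j = 2 := by
    simp only [hw]
    rw [Finset.sum_add_distrib, ← parseval, ← parseval, hc, hc']
    norm_num
  have hsw' : w (e.symm 0) + w (e.symm 1) + w (e.symm 2) = 2 := by
    have := Equiv.sum_comp e.symm w
    rw [Fin.sum_univ_three (fun k => w (e.symm k))] at this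
    rw [this, hsw]
  rw [Fin.sum_univ_three (fun k => μ k * w (e.symm k))]
  have h02 : μ 2 ≤ μ 0 := hμ (by decide)
  have h12 : μ 2 ≤ μ 1 := hμ (by decide)
  have hsub : μ 2 * w (e.symm 2)
      = 2 * μ 2 - μ 2 * w (e.symm 0) - μ 2 * w (e.symm 1) := by
    have hw2 : w (e.symm 2) = 2 - w (e.symm 0) - w (e.symm 1) := by linarith
    rw [hw2]; ring
  nlinarith [mul_nonneg (sub_nonneg.2 h02) (sub_nonneg.2 (hw1 (e.symm 0))),
    mul_nonneg (sub_nonneg.2 h12) (sub_nonneg.2 (hw1 (e.symm 1))), hsub]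

end Mu
end Spectral
end HorodeckiAux

namespace HorodeckiAux
open Matrix

lemma sqrt4mul (m : ℝ) : Real.sqrt (4 * m) = 2 * Real.sqrt m := by
  rw [show (4 : ℝ) = 2 ^ 2 by norm_num, Real.sqrt_mul (sq_nonneg 2),
    Real.sqrt_sq (by norm_num : (0:ℝ) ≤ 2)]

section Spectral2

variable (T : Matrix (Fin 3) (Fin 3) ℝ) (hsym : (Tᵀ * T).IsHermitian)

lemma Tdot (x : Fin 3 → ℝ) : (T *ᵥ x) ⬝ᵥ (T *ᵥ x) = x ⬝ᵥ ((Tᵀ * T) *ᵥ x) := by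
  conv_rhs => rw [← mulVec_mulVec, dotProduct_mulVec, vecMul_transpose]

lemma qnn (x : Fin 3 → ℝ) : 0 ≤ x ⬝ᵥ ((Tᵀ * T) *ᵥ x) :=
  Tdot T x ▸ dot_self_nonneg _

lemma qsmul (r : ℝ) (x : Fin 3 → ℝ) :
    (r • x) ⬝ᵥ ((Tᵀ * T) *ᵥ (r • x)) = r ^ 2 * (x ⬝ᵥ ((Tᵀ * T) *ᵥ x)) := by
  rw [mulVec_smul, dotProduct_smul, smul_dotProduct, smul_eq_mul, smul_eq_mul]
  ring

variable (μ : Fin 3 → ℝ) (hμ : Antitone μ) (e : Fin 3 ≃ Fin 3)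
  (he : ∀ i, hsym.eigenvalues i = μ (e i))

include hμ he in
lemma claim_sd (s d : Fin 3 → ℝ) (hsd : s ⬝ᵥ d = 0) (h4 : s ⬝ᵥ s + d ⬝ᵥ d = 4) :
    Real.sqrt (s ⬝ᵥ ((Tᵀ * T) *ᵥ s)) + Real.sqrt (d ⬝ᵥ ((Tᵀ * T) *ᵥ d))
      ≤ 2 * Real.sqrt (μ 0 + μ 1) := by
  have hm : 0 ≤ μ 0 + μ 1 :=
    add_nonneg (mu_nonneg T hsym μ hμ e he 0) (mu_nonneg T hsym μ hμ e he 1)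
  have hμ1 : 0 ≤ μ 1 := mu_nonneg T hsym μ hμ e he 1
  have single4 : ∀ x : Fin 3 → ℝ, x ⬝ᵥ x = 4 →
      Real.sqrt (x ⬝ᵥ ((Tᵀ * T) *ᵥ x)) ≤ 2 * Real.sqrt (μ 0 + μ 1) := by
    intro x hx4
    have hcu : ((1/2 : ℝ) • x) ⬝ᵥ ((1/2 : ℝ) • x) = 1 := by
      rw [smul_dotProduct, dotProduct_smul, hx4, smul_eq_mul, smul_eq_mul]; norm_num
    have hsb := single_bound T hsym μ hμ e he ((1/2 : ℝ) • x) hcu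
    have hq4 : x ⬝ᵥ ((Tᵀ * T) *ᵥ x) ≤ 4 * (μ 0 + μ 1) := by
      have heq := qsmul T (1/2 : ℝ) x
      nlinarith
    calc Real.sqrt (x ⬝ᵥ ((Tᵀ * T) *ᵥ x)) ≤ Real.sqrt (4 * (μ 0 + μ 1)) :=
          Real.sqrt_le_sqrt hq4
      _ = 2 * Real.sqrt (μ 0 + μ 1) := sqrt4mul _
  by_cases hs0 : s ⬝ᵥ s = 0
  · have hszero : s = 0 := dotProduct_self_eq_zero.mp hs0
    have hqs : s ⬝ᵥ ((Tᵀ * T) *ᵥ s) = 0 := by rw [hszero]; simp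
    have hd4 : d ⬝ᵥ d = 4 := by linarith
    rw [hqs, Real.sqrt_zero, zero_add]
    exact single4 d hd4
  by_cases hd0 : d ⬝ᵥ d = 0
  · have hdzero : d = 0 := dotProduct_self_eq_zero.mp hd0
    have hqd : d ⬝ᵥ ((Tᵀ * T) *ᵥ d) = 0 := by rw [hdzero]; simp
    have hs4 : s ⬝ᵥ s = 4 := by linarith
    rw [hqd, Real.sqrt_zero, add_zero]
    exact single4 s hs4
  · have hsp : 0 < s ⬝ᵥ s := lt_of_le_of_ne (dot_self_nonneg s) (Ne.symm hs0)
    have hdp : 0 < d ⬝ᵥ d := lt_of_le_of_ne (dot_self_nonneg d) (Ne.symm hd0)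
    set α := Real.sqrt (s ⬝ᵥ s) with hα_def
    set β := Real.sqrt (d ⬝ᵥ d) with hβ_def
    have hα : 0 < α := Real.sqrt_pos.2 hsp
    have hβ : 0 < β := Real.sqrt_pos.2 hdp
    have hα2 : α ^ 2 = s ⬝ᵥ s := Real.sq_sqrt hsp.le
    have hβ2 : β ^ 2 = d ⬝ᵥ d := Real.sq_sqrt hdp.le
    set c := α⁻¹ • s with hc_def
    set c' := β⁻¹ • d with hc'_def
    have hcc : c ⬝ᵥ c = 1 := by
      rw [hc_def, smul_dotProduct, dotProduct_smul, smul_eq_mul, smul_eq_mul, ← hα2]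
      field_simp
    have hcc' : c' ⬝ᵥ c' = 1 := by
      rw [hc'_def, smul_dotProduct, dotProduct_smul, smul_eq_mul, smul_eq_mul, ← hβ2]
      field_simp
    have horthcc : c ⬝ᵥ c' = 0 := by
      rw [hc_def, hc'_def, smul_dotProduct, dotProduct_smul, smul_eq_mul, smul_eq_mul, hsd]
      ring
    have hpair := pair_bound T hsym μ hμ e he c c' hcc hcc' horthcc
    have hs_eq : s = α • c := by
      rw [hc_def, smul_smul, mul_inv_cancel₀ hα.ne', one_smul]
    have hd_eq : d = β • c' := by
      rw [hc'_def, smul_smul, mul_inv_cancel₀ hβ.ne', one_smul]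
    set X := Real.sqrt (c ⬝ᵥ ((Tᵀ * T) *ᵥ c)) with hX_def
    set Y := Real.sqrt (c' ⬝ᵥ ((Tᵀ * T) *ᵥ c')) with hY_def
    have hX2 : X ^ 2 = c ⬝ᵥ ((Tᵀ * T) *ᵥ c) := Real.sq_sqrt (qnn T c)
    have hY2 : Y ^ 2 = c' ⬝ᵥ ((Tᵀ * T) *ᵥ c') := Real.sq_sqrt (qnn T c')
    have hqs_eq : Real.sqrt (s ⬝ᵥ ((Tᵀ * T) *ᵥ s)) = α * X := by
      rw [hs_eq, qsmul, Real.sqrt_mul (sq_nonneg α), Real.sqrt_sq hα.le, hX_def]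
    have hqd_eq : Real.sqrt (d ⬝ᵥ ((Tᵀ * T) *ᵥ d)) = β * Y := by
      rw [hd_eq, qsmul, Real.sqrt_mul (sq_nonneg β), Real.sqrt_sq hβ.le, hY_def]
    have hαβ4 : α ^ 2 + β ^ 2 = 4 := by rw [hα2, hβ2]; exact h4
    have h2 : (α * X + β * Y) ^ 2 + (α * Y - β * X) ^ 2
        = (α ^ 2 + β ^ 2) * (X ^ 2 + Y ^ 2) := by ring
    rw [hαβ4, hX2, hY2] at h2
    have hfin : (α * X + β * Y) ^ 2 ≤ 4 * (μ 0 + μ 1) := by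
      nlinarith [sq_nonneg (α * Y - β * X)]
    have hXnn : 0 ≤ X := Real.sqrt_nonneg _
    have hYnn : 0 ≤ Y := Real.sqrt_nonneg _
    calc Real.sqrt (s ⬝ᵥ ((Tᵀ * T) *ᵥ s)) + Real.sqrt (d ⬝ᵥ ((Tᵀ * T) *ᵥ d))
        = α * X + β * Y := by rw [hqs_eq, hqd_eq]
      _ = Real.sqrt ((α * X + β * Y) ^ 2) := (Real.sqrt_sq (by positivity)).symm
      _ ≤ Real.sqrt (4 * (μ 0 + μ 1)) := Real.sqrt_le_sqrt hfin
      _ = 2 * Real.sqrt (μ 0 + μ 1) := sqrt4mul _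

include hμ he in
lemma upper_bound (a a' b b' : Fin 3 → ℝ) (ha : a ⬝ᵥ a = 1) (ha' : a' ⬝ᵥ a' = 1)
    (hb : b ⬝ᵥ b = 1) (hb' : b' ⬝ᵥ b' = 1) :
    a ⬝ᵥ (T *ᵥ (b + b')) + a' ⬝ᵥ (T *ᵥ (b - b')) ≤ 2 * Real.sqrt (μ 0 + μ 1) := by
  have hsd : (b + b') ⬝ᵥ (b - b') = 0 := by
    rw [add_dotProduct, dotProduct_sub, dotProduct_sub, dotProduct_comm b' b, hb, hb']
    ring
  have h4 : (b + b') ⬝ᵥ (b + b') + (b - b') ⬝ᵥ (b - b') = 4 := by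
    rw [add_dotProduct, dotProduct_add, dotProduct_add, sub_dotProduct, dotProduct_sub,
      dotProduct_sub, dotProduct_comm b' b, hb, hb']
    ring
  have h1 : a ⬝ᵥ (T *ᵥ (b + b')) ≤ Real.sqrt ((b + b') ⬝ᵥ ((Tᵀ * T) *ᵥ (b + b'))) := by
    have := cs_dot a (T *ᵥ (b + b')) ha
    rwa [Tdot] at this
  have h2 : a' ⬝ᵥ (T *ᵥ (b - b')) ≤ Real.sqrt ((b - b') ⬝ᵥ ((Tᵀ * T) *ᵥ (b - b'))) := by
    have := cs_dot a' (T *ᵥ (b - b')) ha'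
    rwa [Tdot] at this
  have h3 := claim_sd T hsym μ hμ e he (b + b') (b - b') hsd h4
  linarith

include hμ he in
lemma attained : ∃ a a' b b' : Fin 3 → ℝ, a ⬝ᵥ a = 1 ∧ a' ⬝ᵥ a' = 1 ∧ b ⬝ᵥ b = 1 ∧
    b' ⬝ᵥ b' = 1 ∧ a ⬝ᵥ (T *ᵥ (b + b')) + a' ⬝ᵥ (T *ᵥ (b - b'))
      = 2 * Real.sqrt (μ 0 + μ 1) := by
  have hμ0 : 0 ≤ μ 0 := mu_nonneg T hsym μ hμ e he 0
  have hμ1 : 0 ≤ μ 1 := mu_nonneg T hsym μ hμ e he 1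
  have hμ2 : 0 ≤ μ 2 := mu_nonneg T hsym μ hμ e he 2
  have hμ10 : μ 1 ≤ μ 0 := hμ (by decide)
  have hμ21 : μ 2 ≤ μ 1 := hμ (by decide)
  have hu : (![1,0,0] : Fin 3 → ℝ) ⬝ᵥ ![1,0,0] = 1 := by
    norm_num [dotProduct, Fin.sum_univ_three]
    rfl
  by_cases hm0 : μ 0 + μ 1 = 0
  · have hall : ∀ j, hsym.eigenvalues j = 0 := by
      intro j
      rw [he]
      have : ∀ k : Fin 3, μ k = 0 := by intro k; fin_cases k <;> simp <;> linarith
      exact this _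
    have hT0 : ∀ x : Fin 3 → ℝ, T *ᵥ x = 0 := by
      intro x
      have h := Tdot T x
      rw [qform T hsym] at h
      simp only [hall, zero_mul, Finset.sum_const_zero] at h
      exact dotProduct_self_eq_zero.mp h
    refine ⟨![1,0,0], ![1,0,0], ![1,0,0], ![1,0,0], hu, hu, hu, hu, ?_⟩
    rw [hT0, hT0, hm0, Real.sqrt_zero]
    simp
  · have hmp : 0 < μ 0 + μ 1 := lt_of_le_of_ne (by linarith) (Ne.symm hm0)
    have hμ0p : 0 < μ 0 := by linarith
    set m := μ 0 + μ 1 with hm_def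
    set i0 := e.symm 0 with hi0
    set i1 := e.symm 1 with hi1
    have hne : i0 ≠ i1 := fun h => by
      have := congrArg e h
      simp only [hi0, hi1, Equiv.apply_symm_apply] at this
      exact absurd this (by decide)
    set u0 := v T hsym i0 with hu0
    set u1 := v T hsym i1 with hu1
    have h00 : u0 ⬝ᵥ u0 = 1 := by simpa using v_orth T hsym i0 i0
    have h11 : u1 ⬝ᵥ u1 = 1 := by simpa using v_orth T hsym i1 i1
    have h01 : u0 ⬝ᵥ u1 = 0 := by simpa [hne] using v_orth T hsym i0 i1
    have h10 : u1 ⬝ᵥ u0 = 0 := by simpa [hne.symm] using v_orth T hsym i1 i0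
    have heig0 : (Tᵀ * T) *ᵥ u0 = μ 0 • u0 := by
      rw [hu0, M_mulVec_v, he, hi0, Equiv.apply_symm_apply]
    have heig1 : (Tᵀ * T) *ᵥ u1 = μ 1 • u1 := by
      rw [hu1, M_mulVec_v, he, hi1, Equiv.apply_symm_apply]
    have hT0n : (T *ᵥ u0) ⬝ᵥ (T *ᵥ u0) = μ 0 := by
      rw [Tdot, heig0, dotProduct_smul, smul_eq_mul, h00, mul_one]
    have hT1n : (T *ᵥ u1) ⬝ᵥ (T *ᵥ u1) = μ 1 := by
      rw [Tdot, heig1, dotProduct_smul, smul_eq_mul, h11, mul_one]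
    set cθ := Real.sqrt (μ 0 / m) with hcθ
    set sθ := Real.sqrt (μ 1 / m) with hsθ
    have hc2 : cθ ^ 2 = μ 0 / m := Real.sq_sqrt (div_nonneg hμ0 hmp.le)
    have hs2 : sθ ^ 2 = μ 1 / m := Real.sq_sqrt (div_nonneg hμ1 hmp.le)
    have hcs1 : cθ ^ 2 + sθ ^ 2 = 1 := by
      rw [hc2, hs2, ← add_div, hm_def]
      field_simp
    -- a vector pairing with T *ᵥ u0
    have hA : ∀ w : Fin 3 → ℝ, ∀ ν : ℝ, 0 ≤ ν → (T *ᵥ w) ⬝ᵥ (T *ᵥ w) = ν →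
        ∃ av : Fin 3 → ℝ, av ⬝ᵥ av = 1 ∧ av ⬝ᵥ (T *ᵥ w) = Real.sqrt ν := by
      intro w ν hν hTw
      by_cases hν0 : ν = 0
      · refine ⟨![1,0,0], hu, ?_⟩
        have : T *ᵥ w = 0 := dotProduct_self_eq_zero.mp (by rw [hTw, hν0])
        rw [this, hν0, Real.sqrt_zero, dotProduct_zero]
      · have hνp : 0 < ν := lt_of_le_of_ne hν (Ne.symm hν0)
        have hsν : 0 < Real.sqrt ν := Real.sqrt_pos.2 hνp
        refine ⟨(Real.sqrt ν)⁻¹ • (T *ᵥ w), ?_, ?_⟩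
        · rw [smul_dotProduct, dotProduct_smul, smul_eq_mul, smul_eq_mul, hTw,
            ← Real.sq_sqrt hν]
          field_simp
          rw [Real.sqrt_sq hsν.le]
        · rw [smul_dotProduct, smul_eq_mul, hTw, ← Real.sq_sqrt hν]
          field_simp
          rw [Real.sqrt_sq hsν.le]
    obtain ⟨a, ha1, ha2⟩ := hA u0 (μ 0) hμ0 hT0n
    obtain ⟨a', ha'1, ha'2⟩ := hA u1 (μ 1) hμ1 hT1n
    set b := cθ • u0 + sθ • u1 with hb_def
    set b' := cθ • u0 - sθ • u1 with hb'_def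
    have hbb : b ⬝ᵥ b = 1 := by
      rw [hb_def]
      simp only [dotProduct_add, add_dotProduct, dotProduct_smul, smul_dotProduct,
        smul_eq_mul, h00, h11, h01, h10]
      linear_combination hcs1
    have hbb' : b' ⬝ᵥ b' = 1 := by
      rw [hb'_def]
      simp only [dotProduct_sub, sub_dotProduct, dotProduct_smul, smul_dotProduct,
        smul_eq_mul, h00, h11, h01, h10]
      linear_combination hcs1
    have hbsum : b + b' = (2 * cθ) • u0 := by rw [hb_def, hb'_def]; module
    have hbdiff : b - b' = (2 * sθ) • u1 := by rw [hb_def, hb'_def]; module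
    refine ⟨a, a', b, b', ha1, ha'1, hbb, hbb', ?_⟩
    rw [hbsum, hbdiff, mulVec_smul, mulVec_smul, dotProduct_smul, dotProduct_smul,
      smul_eq_mul, smul_eq_mul, ha2, ha'2]
    -- 2cθ √μ0 + 2sθ √μ1 = 2 √m
    have hcθ_eq : cθ = Real.sqrt (μ 0) / Real.sqrt m := by
      rw [hcθ, Real.sqrt_div hμ0]
    have hsθ_eq : sθ = Real.sqrt (μ 1) / Real.sqrt m := by
      rw [hsθ, Real.sqrt_div hμ1]
    rw [hcθ_eq, hsθ_eq]
    have h1 : Real.sqrt (μ 0) * Real.sqrt (μ 0) = μ 0 := Real.mul_self_sqrt hμ0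
    have h2 : Real.sqrt (μ 1) * Real.sqrt (μ 1) = μ 1 := Real.mul_self_sqrt hμ1
    have h3 : m / Real.sqrt m = Real.sqrt m := Real.div_sqrt
    have key : Real.sqrt (μ 0) / Real.sqrt m * Real.sqrt (μ 0)
        + Real.sqrt (μ 1) / Real.sqrt m * Real.sqrt (μ 1) = Real.sqrt m := by
      rw [div_mul_eq_mul_div, div_mul_eq_mul_div, h1, h2, ← add_div, hm_def, h3]
    linear_combination 2 * key

end Spectral2
end HorodeckiAux

namespace HorodeckiAux

lemma ksum_left (f : Fin 3 → Matrix (Fin 2) (Fin 2) ℂ) (B : Matrix (Fin 2) (Fin 2) ℂ) :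
    (∑ m, f m) ⊗ₖ B = ∑ m, f m ⊗ₖ B := by
  ext ⟨i, j⟩ ⟨k, l⟩
  simp [Matrix.kroneckerMap_apply, Matrix.sum_apply, Finset.sum_mul]

lemma ksum_right (A : Matrix (Fin 2) (Fin 2) ℂ) (g : Fin 3 → Matrix (Fin 2) (Fin 2) ℂ) :
    A ⊗ₖ (∑ n, g n) = ∑ n, A ⊗ₖ g n := by
  ext ⟨i, j⟩ ⟨k, l⟩
  simp [Matrix.kroneckerMap_apply, Matrix.sum_apply, Finset.mul_sum]

lemma trace_bilin (ρ : Matrix (Fin 2 × Fin 2) (Fin 2 × Fin 2) ℂ) (x y : Fin 3 → ℝ) :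
    (Matrix.trace (ρ * (dotPauli x ⊗ₖ dotPauli y))).re = x ⬝ᵥ (corrTensor ρ *ᵥ y) := by
  have hx : dotPauli x = ∑ m, (x m : ℂ) • pauliVec m := by
    simp [dotPauli, pauliVec, Fin.sum_univ_three]
  have hy : dotPauli y = ∑ n, (y n : ℂ) • pauliVec n := by
    simp [dotPauli, pauliVec, Fin.sum_univ_three]
  rw [hx, hy]
  have hk : (∑ m, (x m : ℂ) • pauliVec m) ⊗ₖ (∑ n, (y n : ℂ) • pauliVec n)
      = ∑ m, ∑ n, ((x m * y n : ℝ) : ℂ) • (pauliVec m ⊗ₖ pauliVec n) := by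
    rw [ksum_left]
    refine Finset.sum_congr rfl fun m _ => ?_
    rw [ksum_right]
    refine Finset.sum_congr rfl fun n _ => ?_
    rw [smul_kronecker, kronecker_smul, smul_smul, Complex.ofReal_mul]
  rw [hk]
  simp only [Matrix.mul_sum, Matrix.mul_smul, Matrix.trace_sum, Matrix.trace_smul,
    Complex.re_sum, smul_eq_mul, Complex.re_ofReal_mul]
  simp only [dotProduct, mulVec, corrTensor]
  refine Finset.sum_congr rfl fun m _ => ?_
  rw [Finset.mul_sum]
  exact Finset.sum_congr rfl fun n _ => by ring

end HorodeckiAux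

theorem horodecki_chsh_criterion (ρ : Matrix (Fin 2 × Fin 2) (Fin 2 × Fin 2) ℂ)
    (hρ : IsDensityMatrix ρ)
    (hsym : ((corrTensor ρ)ᵀ * corrTensor ρ).IsHermitian)
    (μ : Fin 3 → ℝ) (hμ : Antitone μ)
    (heig : ∃ e : Fin 3 ≃ Fin 3, ∀ i, hsym.eigenvalues i = μ (e i)) :
    IsLUB {x : ℝ | ∃ a a' b b' : Fin 3 → ℝ,
        IsUnitVec a ∧ IsUnitVec a' ∧ IsUnitVec b ∧ IsUnitVec b' ∧
        x = (Matrix.trace (ρ * chshOperator a a' b b')).re}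
      (2 * Real.sqrt (μ 0 + μ 1)) ∧
    ((∃ a a' b b' : Fin 3 → ℝ,
        IsUnitVec a ∧ IsUnitVec a' ∧ IsUnitVec b ∧ IsUnitVec b' ∧
        2 < (Matrix.trace (ρ * chshOperator a a' b b')).re) ↔ 1 < μ 0 + μ 1) := by
  classical
  obtain ⟨e, he⟩ := heig
  have hunit : ∀ z : Fin 3 → ℝ, IsUnitVec z ↔ z ⬝ᵥ z = 1 := by
    intro z
    have h : z ⬝ᵥ z = z 0 ^ 2 + z 1 ^ 2 + z 2 ^ 2 := by
      simp [dotProduct, Fin.sum_univ_three]; ring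
    unfold IsUnitVec
    rw [h]
  have hval : ∀ a a' b b' : Fin 3 → ℝ,
      (Matrix.trace (ρ * chshOperator a a' b b')).re
        = a ⬝ᵥ (corrTensor ρ *ᵥ (b + b')) + a' ⬝ᵥ (corrTensor ρ *ᵥ (b - b')) := by
    intro a a' b b'
    rw [chshOperator, Matrix.mul_add, Matrix.trace_add, Complex.add_re,
      HorodeckiAux.trace_bilin, HorodeckiAux.trace_bilin]
  have hub : ∀ x ∈ {x : ℝ | ∃ a a' b b' : Fin 3 → ℝ,
      IsUnitVec a ∧ IsUnitVec a' ∧ IsUnitVec b ∧ IsUnitVec b' ∧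
      x = (Matrix.trace (ρ * chshOperator a a' b b')).re},
      x ≤ 2 * Real.sqrt (μ 0 + μ 1) := by
    rintro x ⟨a, a', b, b', ha, ha', hb, hb', rfl⟩
    rw [hval]
    exact HorodeckiAux.upper_bound (corrTensor ρ) hsym μ hμ e he a a' b b'
      ((hunit a).mp ha) ((hunit a').mp ha') ((hunit b).mp hb) ((hunit b').mp hb')
  obtain ⟨a₀, a₀', b₀, b₀', ha₀, ha₀', hb₀, hb₀', hv₀⟩ :=
    HorodeckiAux.attained (corrTensor ρ) hsym μ hμ e he
  have hmem : 2 * Real.sqrt (μ 0 + μ 1) ∈ {x : ℝ | ∃ a a' b b' : Fin 3 → ℝ,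
      IsUnitVec a ∧ IsUnitVec a' ∧ IsUnitVec b ∧ IsUnitVec b' ∧
      x = (Matrix.trace (ρ * chshOperator a a' b b')).re} := by
    refine ⟨a₀, a₀', b₀, b₀', (hunit a₀).mpr ha₀, (hunit a₀').mpr ha₀',
      (hunit b₀).mpr hb₀, (hunit b₀').mpr hb₀', ?_⟩
    rw [hval]
    exact hv₀.symm
  have hm : 0 ≤ μ 0 + μ 1 :=
    add_nonneg (HorodeckiAux.mu_nonneg (corrTensor ρ) hsym μ hμ e he 0)
      (HorodeckiAux.mu_nonneg (corrTensor ρ) hsym μ hμ e he 1)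
  refine ⟨⟨hub, fun y hy => hy hmem⟩, ?_, ?_⟩
  · rintro ⟨a, a', b, b', ha, ha', hb, hb', hgt⟩
    have hle := hub _ ⟨a, a', b, b', ha, ha', hb, hb', rfl⟩
    have h1 : 1 < Real.sqrt (μ 0 + μ 1) := by linarith
    have := (Real.lt_sqrt (by norm_num : (0:ℝ) ≤ 1)).mp h1
    simpa using this
  · intro h1m
    have h1 : 1 < Real.sqrt (μ 0 + μ 1) :=
      (Real.lt_sqrt (by norm_num : (0:ℝ) ≤ 1)).mpr (by simpa using h1m)
    refine ⟨a₀, a₀', b₀, b₀', (hunit a₀).mpr ha₀, (hunit a₀').mpr ha₀',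
      (hunit b₀).mpr hb₀, (hunit b₀').mpr hb₀', ?_⟩
    rw [hval, hv₀]
    linarith
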